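/- Let d ≥ 1 and m ≥ 1 be integers and let ν be a Borel measure on (ℝ^d)^m. Suppose there exist constants κ ≥ 0 and T > 0 such that for every t ≥ T the lower Lebesgue integral satisfies ∫⁻_{x ∈ [−t,t]^d} ν({y ∈ (ℝ^d)^m : y_i + x ∈ [−t,t]^d for all i = 1,…,m}) dx ≤ κ·t^d. Then ν is a finite measure; more precisely ν((ℝ^d)^m) ≤ κ. -/

import Mathlib

open MeasureTheory

/-- Finiteness criterion for measures on `(ℝ^d)^m`: if for all large `t` the integral over
`x ∈ [−t,t]^d` of `ν {y | ∀ i, y i + x ∈ [−t,t]^d}` is at most `κ t^d`, then `ν` is a finite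
measure with total mass at most `κ`. -/
theorem measure_finite_of_translate_bound (d m : ℕ) (hd : 1 ≤ d) (hm : 1 ≤ m)
    (ν : Measure (Fin m → Fin d → ℝ)) (κ T : ℝ) (hκ : 0 ≤ κ) (hT : 0 < T)
    (h : ∀ t : ℝ, T ≤ t →
      (∫⁻ x in Set.Icc (fun _ : Fin d => -t) (fun _ => t),
        ν {y : Fin m → Fin d → ℝ |
            ∀ i, y i + x ∈ Set.Icc (fun _ : Fin d => -t) (fun _ => t)})
        ≤ ENNReal.ofReal (κ * t ^ d)) :
    ν Set.univ ≤ ENNReal.ofReal κ := by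
  set B : ℕ → Set (Fin m → Fin d → ℝ) :=
    fun n => Set.Icc (fun _ _ => -(n : ℝ)) (fun _ _ => (n : ℝ)) with hB
  have key : ∀ n : ℕ, ν (B n) ≤ ENNReal.ofReal κ := by
    intro n
    set t : ℝ := max T (2 * n) with ht
    have htT : T ≤ t := le_max_left _ _
    have ht0 : 0 < t := lt_of_lt_of_le hT htT
    have htn : 2 * (n : ℝ) ≤ t := le_max_right _ _
    have hn0 : (0 : ℝ) ≤ n := Nat.cast_nonneg n
    -- the smaller cube
    set S : Set (Fin d → ℝ) := Set.Icc (fun _ : Fin d => -(t - n)) (fun _ => t - n) with hS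
    have hsub : S ⊆ Set.Icc (fun _ : Fin d => -t) (fun _ => t) := by
      apply Set.Icc_subset_Icc
      · intro j; simp only; linarith
      · intro j; simp only; linarith
    have hSmeas : MeasurableSet S := measurableSet_Icc
    -- pointwise bound
    have hpt : ∀ x : Fin d → ℝ,
        S.indicator (fun _ => ν (B n)) x
        ≤ ν {y : Fin m → Fin d → ℝ |
            ∀ i, y i + x ∈ Set.Icc (fun _ : Fin d => -t) (fun _ => t)} := by
      intro x
      by_cases hx : x ∈ S
      · rw [Set.indicator_of_mem hx]
        apply measure_mono
        intro y hy i
        rw [hS, Set.mem_Icc] at hx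
        rw [hB, Set.mem_Icc] at hy
        rw [Set.mem_Icc]
        constructor <;> intro j
        · have h1 : -(t - (n : ℝ)) ≤ x j := hx.1 j
          have h2 : -(n : ℝ) ≤ y i j := hy.1 i j
          simp only [Pi.add_apply]
          linarith
        · have h1 : x j ≤ t - (n : ℝ) := hx.2 j
          have h2 : y i j ≤ (n : ℝ) := hy.2 i j
          simp only [Pi.add_apply]
          linarith
      · rw [Set.indicator_of_notMem hx]
        exact zero_le
    -- volume of the smaller cube
    have hvol : volume S = (ENNReal.ofReal (2 * (t - n))) ^ d := by
      rw [hS, Real.volume_Icc_pi]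
      simp only [sub_neg_eq_add, Finset.prod_const, Finset.card_univ, Fintype.card_fin]
      rw [show t - (n : ℝ) + (t - n) = 2 * (t - n) by ring]
    -- key chain of inequalities
    have chain : ν (B n) * ENNReal.ofReal (t ^ d)
        ≤ ENNReal.ofReal κ * ENNReal.ofReal (t ^ d) := by
      calc ν (B n) * ENNReal.ofReal (t ^ d)
          ≤ ν (B n) * volume S := by
            rw [hvol, ENNReal.ofReal_pow ht0.le]
            gcongr
            linarith
        _ = ∫⁻ x in Set.Icc (fun _ : Fin d => -t) (fun _ => t),
              S.indicator (fun _ => ν (B n)) x := by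
            rw [lintegral_indicator hSmeas, setLIntegral_const,
              Measure.restrict_apply hSmeas, Set.inter_eq_left.mpr hsub]
        _ ≤ ∫⁻ x in Set.Icc (fun _ : Fin d => -t) (fun _ => t),
              ν {y : Fin m → Fin d → ℝ |
                ∀ i, y i + x ∈ Set.Icc (fun _ : Fin d => -t) (fun _ => t)} :=
            lintegral_mono hpt
        _ ≤ ENNReal.ofReal (κ * t ^ d) := h t htT
        _ = ENNReal.ofReal κ * ENNReal.ofReal (t ^ d) := ENNReal.ofReal_mul hκ
    have htd : ENNReal.ofReal (t ^ d) ≠ 0 := by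
      simp [ENNReal.ofReal_eq_zero, not_le, pow_pos ht0]
    exact (ENNReal.mul_le_mul_iff_left htd ENNReal.ofReal_ne_top).mp chain
  -- the cubes exhaust the whole space
  have hBmono : Monotone B := by
    intro a b hab
    apply Set.Icc_subset_Icc
    · intro i j
      have : (a : ℝ) ≤ b := by exact_mod_cast hab
      simpa using neg_le_neg this
    · intro i j
      have : (a : ℝ) ≤ b := by exact_mod_cast hab
      simpa using this
  have hunion : ⋃ n, B n = Set.univ := by
    ext y
    simp only [Set.mem_iUnion, Set.mem_univ, iff_true]
    obtain ⟨M, hM⟩ := Finite.exists_le (fun p : Fin m × Fin d => |y p.1 p.2|)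
    refine ⟨⌈M⌉₊, ?_, ?_⟩ <;> intro i j
    · have := abs_le.mp ((hM (i, j)).trans (Nat.le_ceil M))
      exact this.1
    · have := abs_le.mp ((hM (i, j)).trans (Nat.le_ceil M))
      exact this.2
  calc ν Set.univ = ν (⋃ n, B n) := by rw [hunion]
    _ = ⨆ n, ν (B n) := hBmono.directed_le.measure_iUnion
    _ ≤ ENNReal.ofReal κ := iSup_le key
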